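/- (Per-occurrence crossing bijection) Let X_1,…,X_n be an SLP representing T = val(X_n), let q ≥ 2, let X_i = X_ℓ X_r be a variable, let [u':v'] ∈ itv(X_i), and set b = u' + |val(X_ℓ)|. Then for every q-gram P ∈ Σ^q, the number of positions k with u' ≤ k, k + q − 1 ≤ v', k ≤ b − 1, k + q − 1 ≥ b, and T[k:k+q−1] = P (i.e., the number of occurrences of P inside this occurrence interval of X_i that cross the boundary between the X_ℓ-part and the X_r-part) equals |Occ(t_i, P)|. -/

import Mathlib

/-- The substring `S[u:v]` (1-indexed, inclusive; empty if `v < u`). -/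
def substr {α : Type*} (S : List α) (u v : ℕ) : List α := (S.drop (u - 1)).take (v + 1 - u)

/-- `pre(S,q) = S[1:min(q,|S|)]`, the length-`q` prefix of `S`. -/
def pre {α : Type*} (S : List α) (q : ℕ) : List α := S.take q

/-- `suf(S,q) = S[max(1,|S|-q+1):|S|]`, the length-`q` suffix of `S`. -/
def suf {α : Type*} (S : List α) (q : ℕ) : List α := S.drop (S.length - q)

/-- `Occ(T,P) = {k ≥ 1 : T[k:k+|P|-1] = P}`. -/
def Occ {α : Type*} (T P : List α) : Set ℕ := {k | 1 ≤ k ∧ substr T k (k + P.length - 1) = P}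

/-- A straight-line program of size `n`: each variable `X_i` (0-indexed here) is either a
terminal `a ∈ Σ` or a concatenation `X_ℓ X_r` with `ℓ, r < i`. -/
structure SLP (α : Type*) (n : ℕ) where
  rule : Fin n → α ⊕ (Fin n × Fin n)
  wf : ∀ i l r, rule i = Sum.inr (l, r) → l < i ∧ r < i

namespace SLP

variable {α : Type*} {n : ℕ}

/-- The string `val(X_i)` derived by variable `X_i`. -/
def val (S : SLP α n) : Fin n → List α
  | i =>
    match h : S.rule i with
    | Sum.inl a => [a]
    | Sum.inr (l, r) => S.val l ++ S.val r
termination_by i => i.val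
decreasing_by
  · exact (S.wf i l r h).1
  · exact (S.wf i l r h).2

/-- The set `itv(X_i)` of occurrence intervals of `X_i` in the derivation of `T = val(X_n)`. -/
def itv (S : SLP α n) : Fin n → Set (ℕ × ℕ)
  | i =>
    if i.val = n - 1 then {(1, (S.val i).length)}
    else
      {p | ∃ k l, ∃ h : S.rule k = Sum.inr (l, i),
          ∃ uv ∈ S.itv k, p = (uv.1 + (S.val l).length, uv.2)} ∪
      {p | ∃ k r, ∃ h : S.rule k = Sum.inr (i, r),
          ∃ uv ∈ S.itv k, p = (uv.1, uv.1 + (S.val i).length - 1)}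
termination_by i => n - i.val
decreasing_by
  · have h1 : (i : ℕ) < (k : ℕ) := (S.wf k l i h).2
    have h2 : (k : ℕ) < n := k.isLt
    omega
  · have h1 : (i : ℕ) < (k : ℕ) := (S.wf k i r h).1
    have h2 : (k : ℕ) < n := k.isLt
    omega

/-- `vOcc(X_i) = |itv(X_i)|`. -/
noncomputable def vOcc (S : SLP α n) (i : Fin n) : ℕ := (S.itv i).ncard

end SLP

-- auxiliary lemmas
theorem SLP.val_concat {α : Type*} {n : ℕ} (S : SLP α n) {i l r : Fin n}
    (h : S.rule i = Sum.inr (l, r)) : S.val i = S.val l ++ S.val r := by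
  rw [SLP.val]
  split
  · simp_all
  · rename_i l' r' h'
    rw [h] at h'
    cases h'
    rfl

theorem itv_spec {α : Type*} {n : ℕ} (S : SLP α n) (hn : 0 < n) (i : Fin n) (u v : ℕ)
    (h : (u, v) ∈ S.itv i) :
    1 ≤ u ∧ v + 1 = u + (S.val i).length ∧
      v ≤ (S.val ⟨n - 1, Nat.sub_lt hn one_pos⟩).length ∧
      ((S.val ⟨n - 1, Nat.sub_lt hn one_pos⟩).drop (u - 1)).take (S.val i).length = S.val i := by
  rw [SLP.itv] at h
  split_ifs at h with hi
  · have hieq : i = ⟨n - 1, Nat.sub_lt hn one_pos⟩ := Fin.ext hi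
    rw [Set.mem_singleton_iff, Prod.mk.injEq] at h
    obtain ⟨rfl, rfl⟩ := h
    subst hieq
    exact ⟨le_refl 1, by omega, le_refl _, by simp⟩
  · rcases h with h | h
    · obtain ⟨k, l, hkr, ⟨u₀, v₀⟩, hmem, heq⟩ := h
      have hik : (i : ℕ) < (k : ℕ) := (S.wf k l i hkr).2
      have hkn : (k : ℕ) < n := k.isLt
      obtain ⟨h1, h2, h3, h4⟩ := itv_spec S hn k u₀ v₀ hmem
      have hvk := SLP.val_concat S hkr
      rw [Prod.mk.injEq] at heq
      obtain ⟨rfl, rfl⟩ := heq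
      rw [hvk, List.length_append] at h2 h4
      refine ⟨by omega, by omega, h3, ?_⟩
      have hd : (S.val ⟨n - 1, Nat.sub_lt hn one_pos⟩).drop (u₀ + (S.val l).length - 1)
          = ((S.val ⟨n - 1, Nat.sub_lt hn one_pos⟩).drop (u₀ - 1)).drop (S.val l).length := by
        rw [List.drop_drop]
        congr 1
        omega
      rw [hd]
      calc (((S.val ⟨n - 1, Nat.sub_lt hn one_pos⟩).drop (u₀ - 1)).drop (S.val l).length).take
            (S.val i).length
          = (((S.val ⟨n - 1, Nat.sub_lt hn one_pos⟩).drop (u₀ - 1)).take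
              ((S.val l).length + (S.val i).length)).drop (S.val l).length := by
            rw [List.drop_take, Nat.add_sub_cancel_left]
        _ = (S.val l ++ S.val i).drop (S.val l).length := by rw [h4]
        _ = S.val i := List.drop_left
    · obtain ⟨k, r, hkr, ⟨u₀, v₀⟩, hmem, heq⟩ := h
      have hik : (i : ℕ) < (k : ℕ) := (S.wf k i r hkr).1
      have hkn : (k : ℕ) < n := k.isLt
      obtain ⟨h1, h2, h3, h4⟩ := itv_spec S hn k u₀ v₀ hmem
      have hvk := SLP.val_concat S hkr
      rw [Prod.mk.injEq] at heq
      obtain ⟨rfl, rfl⟩ := heq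
      rw [hvk, List.length_append] at h2 h4
      refine ⟨h1, by omega, by omega, ?_⟩
      calc ((S.val ⟨n - 1, Nat.sub_lt hn one_pos⟩).drop (u - 1)).take (S.val i).length
          = (((S.val ⟨n - 1, Nat.sub_lt hn one_pos⟩).drop (u - 1)).take
              ((S.val i).length + (S.val r).length)).take (S.val i).length := by
            rw [List.take_take, min_eq_left (Nat.le_add_right _ _)]
        _ = (S.val i ++ S.val r).take (S.val i).length := by rw [h4]
        _ = S.val i := List.take_left
termination_by n - i.val
decreasing_by
  · omega
  · omega

theorem window_eq {α : Type*} (A B L : List α) (u' q j k : ℕ) (hq : 2 ≤ q) (hu : 1 ≤ u')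
    (hj1 : 1 ≤ j) (hjs : j ≤ min A.length (q - 1))
    (hjB : j + q - 1 ≤ min A.length (q - 1) + B.length)
    (hk : k = j + (u' + A.length - min A.length (q - 1)) - 1)
    (hD : (L.drop (u' - 1)).take (A.length + B.length) = A ++ B) :
    ((suf A (q - 1) ++ pre B (q - 1)).drop (j - 1)).take q = (L.drop (k - 1)).take q := by
  have hsm : min A.length (q - 1) ≤ A.length := min_le_left _ _
  have hlen : (A.drop (A.length - min A.length (q - 1))).length = min A.length (q - 1) := by
    rw [List.length_drop]; omega
  have ht : suf A (q - 1) ++ pre B (q - 1) =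
      ((A ++ B).drop (A.length - min A.length (q - 1))).take (min A.length (q - 1) + (q - 1)) := by
    rw [List.drop_append, List.take_append]
    rw [show A.length - min A.length (q - 1) - A.length = 0 from by omega, List.drop_zero]
    rw [List.take_of_length_le (by rw [hlen]; omega), hlen]
    rw [show min A.length (q - 1) + (q - 1) - min A.length (q - 1) = q - 1 from by omega]
    unfold suf pre
    rw [show A.length - min A.length (q - 1) = A.length - (q - 1) from by omega]
  calc ((suf A (q - 1) ++ pre B (q - 1)).drop (j - 1)).take q
      = ((A ++ B).drop (A.length - min A.length (q - 1) + (j - 1))).take q := by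
        rw [ht, List.drop_take, List.take_take, List.drop_drop,
          show min q (min A.length (q - 1) + (q - 1) - (j - 1)) = q from by omega]
    _ = (L.drop (k - 1)).take q := by
        rw [← hD, List.drop_take, List.take_take, List.drop_drop,
          show min q (A.length + B.length - (A.length - min A.length (q - 1) + (j - 1))) = q
            from by omega,
          show u' - 1 + (A.length - min A.length (q - 1) + (j - 1)) = k - 1 from by omega]

/-- per-occurrence crossing bijection: for `q ≥ 2`, a concatenation variable
`X_i = X_ℓ X_r`, an occurrence interval `[u':v'] ∈ itv(X_i)` with boundary
`b = u' + |val(X_ℓ)|`, and every `q`-gram `P`: the number of positions `k` with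
`u' ≤ k`, `k + q - 1 ≤ v'`, `k ≤ b - 1`, `b ≤ k + q - 1` and `T[k:k+q-1] = P`
(occurrences of `P` inside this occurrence of `X_i` crossing the boundary)
equals `|Occ(t_i, P)|` where `t_i = suf(val(X_ℓ),q-1)·pre(val(X_r),q-1)`. -/
theorem slp_crossing_occurrences {α : Type*} {n : ℕ} (S : SLP α n) (hn : 0 < n)
    (q : ℕ) (hq : 2 ≤ q) (i : Fin n) (l r : Fin n) (hrule : S.rule i = Sum.inr (l, r))
    (u' v' : ℕ) (hint : (u', v') ∈ S.itv i) (P : List α) (hP : P.length = q) :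
    {k : ℕ | u' ≤ k ∧ k + q - 1 ≤ v' ∧ k ≤ u' + (S.val l).length - 1 ∧
        u' + (S.val l).length ≤ k + q - 1 ∧
        substr (S.val ⟨n - 1, Nat.sub_lt hn one_pos⟩) k (k + q - 1) = P}.ncard =
      (Occ (suf (S.val l) (q - 1) ++ pre (S.val r) (q - 1)) P).ncard := by
  obtain ⟨hu, hv, hvT, hsub⟩ := itv_spec S hn i u' v' hint
  have hvi := SLP.val_concat S hrule
  set T := S.val ⟨n - 1, Nat.sub_lt hn one_pos⟩ with hT
  set A := S.val l with hA
  set B := S.val r with hB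
  rw [hvi, List.length_append] at hv hsub
  set m := A.length with hm
  set s := min m (q - 1) with hs
  have hsm : s ≤ m := min_le_left _ _
  have htlen : (suf A (q - 1) ++ pre B (q - 1)).length = (m - (m - (q - 1))) + min (q - 1) B.length := by
    simp [suf, pre, hm]
  have hset : {k : ℕ | u' ≤ k ∧ k + q - 1 ≤ v' ∧ k ≤ u' + m - 1 ∧
        u' + m ≤ k + q - 1 ∧ substr T k (k + q - 1) = P} =
      (fun j => j + (u' + m - s) - 1) '' Occ (suf A (q - 1) ++ pre B (q - 1)) P := by
    ext k
    simp only [Set.mem_setOf_eq, Set.mem_image, Occ]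
    constructor
    · rintro ⟨hk1, hk2, hk3, hk4, hk5⟩
      refine ⟨k + 1 - (u' + m - s), ⟨by omega, ?_⟩, by omega⟩
      unfold substr
      rw [show k + 1 - (u' + m - s) + P.length - 1 + 1 - (k + 1 - (u' + m - s)) = q from by omega]
      rw [window_eq A B T u' q (k + 1 - (u' + m - s)) k hq hu (by omega) (by omega) (by omega)
        (by omega) hsub]
      unfold substr at hk5
      rw [show k + q - 1 + 1 - k = q from by omega] at hk5
      exact hk5
    · rintro ⟨j, ⟨hj1, hjsub⟩, rfl⟩
      have hlc := congrArg List.length hjsub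
      rw [substr, List.length_take, List.length_drop, htlen] at hlc
      have hjb : j + q - 1 ≤ s + min (q - 1) B.length := by omega
      refine ⟨by omega, by omega, by omega, by omega, ?_⟩
      unfold substr
      rw [show j + (u' + m - s) - 1 + q - 1 + 1 - (j + (u' + m - s) - 1) = q from by omega]
      rw [← window_eq A B T u' q j (j + (u' + m - s) - 1) hq hu hj1 (by omega) (by omega) rfl hsub]
      unfold substr at hjsub
      rw [show j + P.length - 1 + 1 - j = q from by omega] at hjsub
      exact hjsub
  rw [hset, Set.ncard_image_of_injOn]
  intro a ha b hb hab
  have ha1 : 1 ≤ a := ha.1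
  have hb1 : 1 ≤ b := hb.1
  simp only at hab
  omega
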